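/- Let (V, Ω) be a symplectic 𝔤-module of convex type, i.e. there exists y ∈ 𝔤 such that the Hamiltonian function v ↦ Ω(y.v, v) is positive definite on V. Then every X ∈ End_𝔤(V) with X^# = -X (equivalently, X ∈ End_𝔤(V) ∩ 𝔰𝔭(V, Ω)) has purely imaginary spectrum, i.e. all complex eigenvalues of X lie in iℝ. -/

import Mathlib

attribute [local instance 100] LieRing.ofAssociativeRing

open scoped TensorProduct


/-- In a symplectic `𝔤`-module of convex type, every `𝔤`-endomorphism `X`
with `X^# = -X` (i.e. `X ∈ End_𝔤(V) ∩ 𝔰𝔭(V, Ω)`) has purely imaginary spectrum: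
every complex eigenvalue of the complexification of `X` lies in `iℝ`. -/
theorem sympmodconv_spec_skewsym_end
    (V : Type*) [AddCommGroup V] [Module ℝ V] [FiniteDimensional ℝ V]
    (Ω : LinearMap.BilinForm ℝ V)
    (hΩalt : ∀ v : V, Ω v v = 0)
    (hΩnondeg : ∀ v : V, (∀ w : V, Ω v w = 0) → v = 0)
    (g : Type*) [LieRing g] [LieAlgebra ℝ g]
    (ρ : g →ₗ⁅ℝ⁆ Module.End ℝ V)
    (hskew : ∀ (x : g) (v w : V), Ω (ρ x v) w + Ω v (ρ x w) = 0)
    (hconv : ∃ y : g, ∀ v : V, v ≠ 0 → 0 < Ω (ρ y v) v)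
    (X : Module.End ℝ V)
    (hXcomm : ∀ x : g, ρ x ∘ₗ X = X ∘ₗ ρ x)
    (hXskew : ∀ v w : V, Ω (X v) w + Ω v (X w) = 0) :
    ∀ μ ∈ spectrum ℂ (LinearMap.baseChange ℂ (X : V →ₗ[ℝ] V)), μ.re = 0 := by
  obtain ⟨y, hy⟩ := hconv
  intro μ hμ
  rw [← Module.End.hasEigenvalue_iff_mem_spectrum] at hμ
  obtain ⟨z, hz⟩ := hμ.exists_hasEigenvector
  -- real and imaginary part maps ℂ ⊗[ℝ] V →ₗ[ℝ] V
  set reMap : ℂ ⊗[ℝ] V →ₗ[ℝ] V :=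
    TensorProduct.lift ((LinearMap.lsmul ℝ V) ∘ₗ Complex.reLm) with hreMap
  set imMap : ℂ ⊗[ℝ] V →ₗ[ℝ] V :=
    TensorProduct.lift ((LinearMap.lsmul ℝ V) ∘ₗ Complex.imLm) with himMap
  have reMap_tmul : ∀ (c : ℂ) (w : V), reMap (c ⊗ₜ[ℝ] w) = c.re • w := by
    intro c w; simp [hreMap]
  have imMap_tmul : ∀ (c : ℂ) (w : V), imMap (c ⊗ₜ[ℝ] w) = c.im • w := by
    intro c w; simp [himMap]
  set u := reMap z with hu'
  set v := imMap z with hv'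
  -- decomposition: z = 1 ⊗ u + I ⊗ v
  have hdec : ∀ t : ℂ ⊗[ℝ] V, t = (1 : ℂ) ⊗ₜ[ℝ] (reMap t) + Complex.I ⊗ₜ[ℝ] (imMap t) := by
    intro t
    induction t using TensorProduct.induction_on with
    | zero => simp
    | tmul c w =>
      rw [reMap_tmul, imMap_tmul, TensorProduct.tmul_smul, TensorProduct.tmul_smul,
        TensorProduct.smul_tmul', TensorProduct.smul_tmul', ← TensorProduct.add_tmul]
      congr 1
      simp [Complex.ext_iff]
    | add s t hs ht =>
      rw [map_add, map_add, TensorProduct.tmul_add, TensorProduct.tmul_add]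
      conv_lhs => rw [hs, ht]
      abel
  -- the eigenvalue equation in real and imaginary parts
  have heig : (LinearMap.baseChange ℂ (X : V →ₗ[ℝ] V)) z = μ • z := hz.apply_eq_smul
  have hre_bc : ∀ t : ℂ ⊗[ℝ] V,
      reMap ((LinearMap.baseChange ℂ (X : V →ₗ[ℝ] V)) t) = X (reMap t) := by
    intro t
    induction t using TensorProduct.induction_on with
    | zero => simp
    | tmul c w => simp [reMap_tmul]
    | add s t hs ht => simp [map_add, hs, ht]
  have him_bc : ∀ t : ℂ ⊗[ℝ] V,
      imMap ((LinearMap.baseChange ℂ (X : V →ₗ[ℝ] V)) t) = X (imMap t) := by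
    intro t
    induction t using TensorProduct.induction_on with
    | zero => simp
    | tmul c w => simp [imMap_tmul]
    | add s t hs ht => simp [map_add, hs, ht]
  have hre_smul : ∀ t : ℂ ⊗[ℝ] V,
      reMap (μ • t) = μ.re • reMap t - μ.im • imMap t := by
    intro t
    induction t using TensorProduct.induction_on with
    | zero => simp
    | tmul c w =>
      rw [TensorProduct.smul_tmul', reMap_tmul, reMap_tmul, imMap_tmul]
      rw [smul_smul, smul_smul, ← sub_smul]
      congr 1
    | add s t hs ht =>
      simp only [smul_add, map_add, hs, ht, smul_add]
      abel
  have him_smul : ∀ t : ℂ ⊗[ℝ] V,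
      imMap (μ • t) = μ.im • reMap t + μ.re • imMap t := by
    intro t
    induction t using TensorProduct.induction_on with
    | zero => simp
    | tmul c w =>
      rw [TensorProduct.smul_tmul', imMap_tmul, reMap_tmul, imMap_tmul]
      rw [smul_smul, smul_smul, ← add_smul]
      congr 1
      simp only [smul_eq_mul, Complex.mul_im]
      ring
    | add s t hs ht =>
      simp only [smul_add, map_add, hs, ht, smul_add]
      abel
  have hXu : X u = μ.re • u - μ.im • v := by
    rw [hu', hv', ← hre_bc, heig, hre_smul]
  have hXv : X v = μ.im • u + μ.re • v := by
    rw [hu', hv', ← him_bc, heig, him_smul]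
  -- the positive definite symmetric bilinear form B
  set B : V → V → ℝ := fun a b => Ω (ρ y a) b + Ω (ρ y b) a with hB
  have hBsymm : ∀ a b, B a b = B b a := by intro a b; simp [hB, add_comm]
  have hBpos : ∀ a : V, a ≠ 0 → 0 < B a a := by
    intro a ha
    have := hy a ha
    simp only [hB]
    linarith
  have hBnonneg : ∀ a : V, 0 ≤ B a a := by
    intro a
    by_cases ha : a = 0
    · simp [hB, ha]
    · exact le_of_lt (hBpos a ha)
  have hcomm : ∀ w : V, ρ y (X w) = X (ρ y w) := fun w => LinearMap.congr_fun (hXcomm y) w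
  -- X is skew with respect to B, hence B (X a) a = 0
  have hBXself : ∀ a : V, B (X a) a = 0 := by
    intro a
    have h1 := hXskew (ρ y a) a
    simp only [hB, hcomm]
    linarith
  -- bilinearity computations
  have hBu : B (X u) u = μ.re * B u u - μ.im * B v u := by
    rw [hXu]
    simp only [hB, map_sub, map_smul, LinearMap.sub_apply, LinearMap.smul_apply,
      smul_eq_mul]
    ring
  have hBv : B (X v) v = μ.im * B u v + μ.re * B v v := by
    rw [hXv]
    simp only [hB, map_add, map_smul, LinearMap.add_apply, LinearMap.smul_apply,
      smul_eq_mul]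
    ring
  have hkey : μ.re * (B u u + B v v) = 0 := by
    have h1 := hBXself u
    have h2 := hBXself v
    have h3 := hBsymm u v
    rw [hBu] at h1
    rw [hBv] at h2
    linear_combination h1 + h2 - μ.im * h3
  -- u and v are not both zero
  have hne : u ≠ 0 ∨ v ≠ 0 := by
    by_contra h
    push_neg at h
    obtain ⟨h1, h2⟩ := h
    apply hz.2
    rw [hdec z, ← hu', ← hv', h1, h2]
    simp
  have hpos : 0 < B u u + B v v := by
    rcases hne with h | h
    · have := hBpos u h
      have := hBnonneg v
      linarith
    · have := hBpos v h
      have := hBnonneg u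
      linarith
  exact (mul_eq_zero.mp hkey).resolve_right (ne_of_gt hpos)
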